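/- Let (S,+) be a commutative cancellative semigroup with group of quotients G. Then S is piecewise syndetic in G, K(βS) = cl(S) ∩ K(βG), and every subset of S that is central in S is central in G. -/

import Mathlib

/-- `K` is the smallest (two-sided) ideal of the subsemigroup `T` of `βG`
with respect to the operation `addOp`. -/
def IsSmallestIdealOn {G : Type*} (addOp : Ultrafilter G → Ultrafilter G → Ultrafilter G)
    (T K : Set (Ultrafilter G)) : Prop :=
  K ⊆ T ∧ K.Nonempty ∧ (∀ p ∈ K, ∀ q ∈ T, addOp p q ∈ K ∧ addOp q p ∈ K) ∧
  ∀ K' : Set (Ultrafilter G),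
    (K' ⊆ T ∧ K'.Nonempty ∧ ∀ p ∈ K', ∀ q ∈ T, addOp p q ∈ K' ∧ addOp q p ∈ K') →
    K ⊆ K'

attribute [local instance] Ultrafilter.add Ultrafilter.addSemigroup

/-- Below every nonempty closed set `X` absorbing left addition by elements of `U`,
there is a minimal such set. -/
private theorem exists_min_LI {G : Type*} [AddSemigroup G]
    (U X : Set (Ultrafilter G)) (hXc : IsClosed X) (hXn : X.Nonempty)
    (hXi : ∀ t ∈ U, ∀ p ∈ X, t + p ∈ X) :
    ∃ m, m ⊆ X ∧ IsClosed m ∧ m.Nonempty ∧ (∀ t ∈ U, ∀ p ∈ m, t + p ∈ m) ∧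
      ∀ J : Set (Ultrafilter G), IsClosed J → J.Nonempty →
        (∀ t ∈ U, ∀ p ∈ J, t + p ∈ J) → J ⊆ m → J = m := by
  set P : Set (Set (Ultrafilter G)) :=
    {I | I ⊆ X ∧ IsClosed I ∧ I.Nonempty ∧ ∀ t ∈ U, ∀ p ∈ I, t + p ∈ I} with hP
  have hzorn : ∀ c ⊆ P, IsChain (· ⊆ ·) c → c.Nonempty → ∃ lb ∈ P, ∀ s ∈ c, lb ⊆ s := by
    intro c hcP hchain hcne
    refine ⟨⋂₀ c, ⟨?_, ?_, ?_, ?_⟩, fun s hs => Set.sInter_subset_of_mem hs⟩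
    · obtain ⟨s, hs⟩ := hcne
      exact (Set.sInter_subset_of_mem hs).trans (hcP hs).1
    · exact isClosed_sInter fun s hs => (hcP hs).2.1
    · haveI : Nonempty c := hcne.to_subtype
      refine IsCompact.nonempty_sInter_of_directed_nonempty_isCompact_isClosed ?_
        (fun s hs => (hcP hs).2.2.1)
        (fun s hs => (hcP hs).2.1.isCompact)
        (fun s hs => (hcP hs).2.1)
      intro s hs t ht
      rcases hchain.total hs ht with h | h
      · exact ⟨s, hs, subset_rfl, h⟩
      · exact ⟨t, ht, h, subset_rfl⟩
    · intro t ht p hp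
      exact Set.mem_sInter.2 fun s hs => (hcP hs).2.2.2 t ht p (hp s hs)
  obtain ⟨m, hmX, hmin⟩ := zorn_superset_nonempty P hzorn X ⟨subset_rfl, hXc, hXn, hXi⟩
  obtain ⟨hm1, hm2, hm3, hm4⟩ := hmin.1
  refine ⟨m, hm1, hm2, hm3, hm4, ?_⟩
  intro J hJc hJn hJi hJm
  exact subset_antisymm hJm (hmin.2 ⟨hJm.trans hm1, hJc, hJn, hJi⟩ hJm)

/-- Let `S` be a commutative cancellative semigroup with group of quotients `G`
(realized as a nonempty additively closed subset `S` of the abelian group `G`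
with `G = {a - b : a, b ∈ S}`).  Identifying `βS` with `cl(S) = {p : S ∈ p}` in
`βG`: `S` is piecewise syndetic in `G`, `K(βS) = cl(S) ∩ K(βG)`, and every
subset of `S` central in `S` is central in `G`. -/
theorem stmt19 {G : Type*} [AddCommGroup G] (S : Set G) (hne : S.Nonempty)
    (hclosed : ∀ a ∈ S, ∀ b ∈ S, a + b ∈ S)
    (hquot : ∀ g : G, ∃ a ∈ S, ∃ b ∈ S, g = a - b)
    (addOp : Ultrafilter G → Ultrafilter G → Ultrafilter G)
    (haddOp : ∀ (p q : Ultrafilter G) (A : Set G),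
      A ∈ addOp p q ↔ {a : G | {b : G | a + b ∈ A} ∈ q} ∈ p)
    (KS KG : Set (Ultrafilter G))
    (hKS : IsSmallestIdealOn addOp {p : Ultrafilter G | S ∈ p} KS)
    (hKG : IsSmallestIdealOn addOp Set.univ KG) :
    (∃ p ∈ KG, S ∈ p) ∧
    KS = {p : Ultrafilter G | S ∈ p} ∩ KG ∧
    (∀ A : Set G, A ⊆ S → (∃ p ∈ KS, addOp p p = p ∧ A ∈ p) →
      ∃ p ∈ KG, addOp p p = p ∧ A ∈ p) := by
  -- membership characterization for the mathlib sum of ultrafilters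
  have hmem : ∀ (p q : Ultrafilter G) (A : Set G),
      (A ∈ p + q) ↔ {a : G | {b : G | a + b ∈ A} ∈ q} ∈ p := by
    intro p q A
    have h := Ultrafilter.eventually_add p q (· ∈ A)
    simpa only [Filter.eventually_iff, Ultrafilter.mem_coe, Set.mem_setOf_eq,
      Set.setOf_mem_eq] using h
  -- `addOp` is the mathlib sum
  have hop : ∀ p q : Ultrafilter G, addOp p q = p + q := by
    intro p q
    exact Ultrafilter.ext fun A => (haddOp p q A).trans (hmem p q A).symm
  simp only [IsSmallestIdealOn, hop] at hKS hKG
  simp only [hop]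
  obtain ⟨hKS_T, hKS_ne, hKS_ideal, hKS_min⟩ := hKS
  obtain ⟨-, hKG_ne, hKG_ideal, hKG_min⟩ := hKG
  set T : Set (Ultrafilter G) := {p : Ultrafilter G | S ∈ p} with hT
  have hTc : IsClosed T := ultrafilter_isClosed_basic S
  -- T is a subsemigroup
  have hTadd : ∀ p ∈ T, ∀ q ∈ T, p + q ∈ T := by
    intro p hp q hq
    refine (hmem p q S).2 (Filter.mem_of_superset hp ?_)
    intro a ha
    exact Filter.mem_of_superset hq fun b hb => hclosed a ha b hb
  -- the translated sets D g
  set D : G → Set G := fun g => {x : G | g + x ∈ S} with hD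
  -- the key left ideal L
  set L : Set (Ultrafilter G) := {p : Ultrafilter G | ∀ g : G, D g ∈ p} with hL
  have hLT : L ⊆ T := by
    intro p hp
    have h0 := hp 0
    have : D 0 = S := by ext x; simp [hD]
    rwa [this] at h0
  have hLne : L.Nonempty := by
    have hFIP : ∀ t : Set (Set G), t.Finite → t ⊆ Set.range D →
        ∃ c ∈ S, ∀ u ∈ t, ∀ s ∈ S, c + s ∈ u := by
      intro t htfin
      refine Set.Finite.induction_on t htfin ?_ ?_
      · intro _
        obtain ⟨c, hc⟩ := hne
        exact ⟨c, hc, fun u hu => (Set.notMem_empty u hu).elim⟩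
      · intro u t hut htfin2 ih htr
        obtain ⟨c, hcS, hc⟩ := ih fun v hv => htr (Set.mem_insert_of_mem u hv)
        obtain ⟨g, hgu⟩ := htr (Set.mem_insert u t)
        obtain ⟨a, haS, b, hbS, hab⟩ := hquot g
        refine ⟨c + b, hclosed c hcS b hbS, ?_⟩
        intro v hv s hs
        rcases Set.mem_insert_iff.1 hv with hv | hv
        · subst hv; rw [← hgu]
          show g + (c + b + s) ∈ S
          have : g + (c + b + s) = a + (c + s) := by rw [hab]; abel
          rw [this]
          exact hclosed a haS _ (hclosed c hcS s hs)
        · have : c + b + s = c + (b + s) := by abel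
          rw [this]
          exact hc v hv (b + s) (hclosed b hbS s hs)
    have hgen : (Filter.generate (Set.range D)).NeBot := by
      rw [Filter.generate_neBot_iff]
      intro t htr htfin
      obtain ⟨c, hcS, hc⟩ := hFIP t htfin htr
      obtain ⟨s, hs⟩ := hne
      exact ⟨c + s, fun u hu => hc u hu s hs⟩
    haveI := hgen
    refine ⟨Ultrafilter.of (Filter.generate (Set.range D)), ?_⟩
    intro g
    exact Ultrafilter.of_le (Filter.generate (Set.range D))
      (Filter.GenerateSets.basic (Set.mem_range_self g))
  -- L is a left ideal of βG
  have hLleft : ∀ (q : Ultrafilter G), ∀ p ∈ L, q + p ∈ L := by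
    intro q p hp g
    refine (hmem q p (D g)).2 (Filter.univ_mem' ?_)
    intro a
    show {b : G | a + b ∈ D g} ∈ p
    have : {b : G | a + b ∈ D g} = D (g + a) := by
      ext b; simp only [hD, Set.mem_setOf_eq, add_assoc]
    rw [this]; exact hp (g + a)
  -- Part 1: S is piecewise syndetic in G
  obtain ⟨r, hrKG⟩ := hKG_ne
  obtain ⟨ℓ, hℓL⟩ := hLne
  have hpart1 : ∃ p ∈ KG, S ∈ p := by
    refine ⟨r + ℓ, (hKG_ideal r hrKG ℓ (Set.mem_univ ℓ)).1, ?_⟩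
    exact hLT (hLleft r ℓ hℓL)
  -- Part 2, easy inclusion: KS ⊆ T ∩ KG
  have hsub : KS ⊆ T ∩ KG := by
    apply hKS_min
    refine ⟨Set.inter_subset_left, ?_, ?_⟩
    · obtain ⟨p, hpKG, hpS⟩ := hpart1
      exact ⟨p, hpS, hpKG⟩
    · rintro p ⟨hpT, hpKG⟩ q hqT
      exact ⟨⟨hTadd p hpT q hqT, (hKG_ideal p hpKG q (Set.mem_univ q)).1⟩,
        ⟨hTadd q hqT p hpT, (hKG_ideal p hpKG q (Set.mem_univ q)).2⟩⟩
  -- Every element of KG lies in a minimal closed left ideal of βG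
  have hK0 : KG ⊆ {p : Ultrafilter G | ∃ I : Set (Ultrafilter G),
      (IsClosed I ∧ I.Nonempty ∧ ∀ (q : Ultrafilter G), ∀ x ∈ I, q + x ∈ I) ∧
      (∀ J : Set (Ultrafilter G), IsClosed J → J.Nonempty →
        (∀ (q : Ultrafilter G), ∀ x ∈ J, q + x ∈ J) → J ⊆ I → J = I) ∧ p ∈ I} := by
    apply hKG_min
    refine ⟨Set.subset_univ _, ?_, ?_⟩
    · -- nonempty: there exists a minimal closed left ideal
      obtain ⟨m, _, hmc, hmn, hmi, hmmin⟩ := exists_min_LI Set.univ Set.univ isClosed_univ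
        ⟨r, Set.mem_univ r⟩ (fun _ _ _ _ => Set.mem_univ _)
      obtain ⟨x, hx⟩ := hmn
      exact ⟨x, m, ⟨hmc, ⟨x, hx⟩, fun q y hy => hmi q (Set.mem_univ q) y hy⟩,
        fun J hJc hJn hJi hJm => hmmin J hJc hJn (fun t _ y hy => hJi t y hy) hJm, hx⟩
    · rintro p ⟨I, ⟨hIc, hIn, hIi⟩, hImin, hpI⟩ q -
      constructor
      · -- p + q lies in the minimal closed left ideal I + q
        refine ⟨(· + q) '' I, ⟨?_, ⟨p + q, ⟨p, hpI, rfl⟩⟩, ?_⟩, ?_, ⟨p, hpI, rfl⟩⟩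
        · exact ((hIc.isCompact).image (Ultrafilter.continuous_add_left q)).isClosed
        · rintro r' x ⟨y, hyI, rfl⟩
          exact ⟨r' + y, hIi r' y hyI, add_assoc r' y q⟩
        · -- minimality of the image
          intro J hJc hJn hJi hJsub
          set I' : Set (Ultrafilter G) := I ∩ (· + q) ⁻¹' J with hI'
          have hI'eq : I' = I := by
            apply hImin
            · exact hIc.inter (hJc.preimage (Ultrafilter.continuous_add_left q))
            · obtain ⟨y, hy⟩ := hJn
              obtain ⟨x, hxI, rfl⟩ := hJsub hy
              exact ⟨x, hxI, hy⟩
            · rintro r' x ⟨hxI, hxJ⟩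
              refine ⟨hIi r' x hxI, ?_⟩
              show r' + x + q ∈ J
              rw [add_assoc]
              exact hJi r' (x + q) hxJ
            · exact Set.inter_subset_left
          apply subset_antisymm hJsub
          rintro x ⟨y, hyI, rfl⟩
          rw [← hI'eq] at hyI
          exact hyI.2
      · exact ⟨I, ⟨hIc, hIn, hIi⟩, hImin, hIi q p hpI⟩
  -- Part 2, hard inclusion: T ∩ KG ⊆ KS
  have hsup : T ∩ KG ⊆ KS := by
    rintro z ⟨hzT, hzKG⟩
    obtain ⟨Lz, ⟨hLzc, _, hLzi⟩, hLzmin, hzLz⟩ := hK0 hzKG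
    -- find a minimal closed left ideal L' of T inside T ∩ Lz
    obtain ⟨L', hL'sub, hL'c, hL'n, hL'i, hL'min⟩ := exists_min_LI T (T ∩ Lz)
      (hTc.inter hLzc) ⟨z, hzT, hzLz⟩
      (fun t ht p hp => ⟨hTadd t ht p hp.1, hLzi t p hp.2⟩)
    -- L' ⊆ KS
    obtain ⟨p₀, hp₀⟩ := hL'n
    obtain ⟨y, hyKS⟩ := hKS_ne
    have hyT : y ∈ T := hKS_T hyKS
    have hwL' : y + p₀ ∈ L' := hL'i y hyT p₀ hp₀
    have hwKS : y + p₀ ∈ KS := (hKS_ideal y hyKS p₀ (hL'sub hp₀).1).1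
    set w : Ultrafilter G := y + p₀ with hw
    have hTn : T.Nonempty := ⟨w, (hL'sub hwL').1⟩
    have hJeq : (· + w) '' T = L' := by
      apply hL'min
      · exact ((hTc.isCompact).image (Ultrafilter.continuous_add_left w)).isClosed
      · obtain ⟨t, ht⟩ := hTn; exact ⟨t + w, t, ht, rfl⟩
      · rintro t ht x ⟨u, huT, rfl⟩
        exact ⟨t + u, hTadd t ht u huT, add_assoc t u w⟩
      · rintro x ⟨u, huT, rfl⟩
        exact hL'i u huT w hwL'
    have hL'KS : L' ⊆ KS := by
      rw [← hJeq]
      rintro x ⟨u, huT, rfl⟩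
      exact (hKS_ideal w hwKS u huT).2
    -- Ellis: idempotent e in L'
    have hL'mul : ∀ x ∈ L', ∀ y' ∈ L', x + y' ∈ L' := by
      intro x hx y' hy'
      exact hL'i x (hL'sub hx).1 y' hy'
    obtain ⟨e, heL', hee⟩ := exists_idempotent_in_compact_add_subsemigroup
      (fun r' => Ultrafilter.continuous_add_left r') L' ⟨p₀, hp₀⟩ hL'c.isCompact hL'mul
    have heLz : e ∈ Lz := (hL'sub heL').2
    -- Lz = βG + e, so z + e = z
    have hLzeq : (· + e) '' Set.univ = Lz := by
      apply hLzmin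
      · exact ((isClosed_univ.isCompact).image (Ultrafilter.continuous_add_left e)).isClosed
      · exact ⟨e + e, e, Set.mem_univ e, rfl⟩
      · rintro q x ⟨u, -, rfl⟩
        exact ⟨q + u, Set.mem_univ _, add_assoc q u e⟩
      · rintro x ⟨u, -, rfl⟩
        exact hLzi u e heLz
    have hze : z + e = z := by
      obtain ⟨a, -, rfl⟩ : z ∈ (· + e) '' Set.univ := hLzeq ▸ hzLz
      show a + e + e = a + e
      rw [add_assoc, hee]
    have : z + e ∈ KS := (hKS_ideal e (hL'KS heL') z hzT).2
    rwa [hze] at this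
  have hpart2 : KS = T ∩ KG := subset_antisymm hsub hsup
  refine ⟨hpart1, hpart2, ?_⟩
  rintro A hAS ⟨p, hpKS, hpp, hpA⟩
  exact ⟨p, (hsub hpKS).2, hpp, hpA⟩
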